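/- arXiv:2506.19810 — 2 statements merged into one kernel-verified Lean document; each statement's English description precedes it below -/
import Mathlib

section
/- For any Y-lattice Λ on a finite set Y, the VC dimension of Λ equals the maximum over all subsets A ⊆ Y of the Λ-complexity C_Λ(A). -/
/-- A `Y`-lattice: a family of subsets of `Y` containing `Y` itself and closed
under binary intersections. -/
def IsYLattice {Y : Type} (L : Set (Set Y)) : Prop :=
  Set.univ ∈ L ∧ ∀ A ∈ L, ∀ B ∈ L, A ∩ B ∈ L

/-- The `Λ`-hull of `A`: the intersection of all members of `Λ` containing `A`. -/
def latHull {Y : Type} (L : Set (Set Y)) (A : Set Y) : Set Y :=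
  ⋂₀ {B | B ∈ L ∧ A ⊆ B}

/-- The `Λ`-complexity of `A`: minimal cardinality of `B ⊆ A` with `A ⊆ hull(B)`. -/
noncomputable def latComplexity {Y : Type} (L : Set (Set Y)) (A : Set Y) : ℕ :=
  sInf {n : ℕ | ∃ B : Set Y, B ⊆ A ∧ B.ncard = n ∧ A ⊆ latHull L B}

/-- The pivot dimension of `Λ`: maximal `Λ`-complexity of an element of `Λ`. -/
noncomputable def PDim {Y : Type} (L : Set (Set Y)) : ℕ :=
  sSup {n : ℕ | ∃ A ∈ L, n = latComplexity L A}

/-- `Λ` shatters `S` if every subset of `S` is a trace `S ∩ C` for some `C ∈ Λ`. -/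
def Shatters {Y : Type} (L : Set (Set Y)) (S : Set Y) : Prop :=
  ∀ B ⊆ S, ∃ C ∈ L, S ∩ C = B

/-- VC dimension of the family `Λ`. -/
noncomputable def VCdim {Y : Type} (L : Set (Set Y)) : ℕ :=
  sSup {n : ℕ | ∃ S : Set Y, Shatters L S ∧ S.ncard = n}

/-- `Λ(H)`: the minimal `Y`-lattice containing every value `h x` for `h ∈ H`. -/
def LamH {X Y : Type} (H : Set (X → Set Y)) : Set (Set Y) :=
  {A | ∀ L : Set (Set Y), IsYLattice L → (∀ h ∈ H, ∀ x : X, h x ∈ L) → A ∈ L}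

set_option linter.unusedSectionVars false

section
variable {Y : Type} [Fintype Y] {L : Set (Set Y)}

lemma subset_latHull (A : Set Y) : A ⊆ latHull L A :=
  fun _ hx => Set.mem_sInter.2 fun _ hB => hB.2 hx

lemma latHull_subset {A C : Set Y} (hC : C ∈ L) (h : A ⊆ C) : latHull L A ⊆ C :=
  Set.sInter_subset_of_mem ⟨hC, h⟩

lemma latHull_mono {A B : Set Y} (h : A ⊆ B) : latHull L A ⊆ latHull L B :=
  fun x hx => Set.mem_sInter.2 fun C hC => Set.mem_sInter.1 hx C ⟨hC.1, h.trans hC.2⟩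

lemma sInter_mem_lat (hL : IsYLattice L) : ∀ F : Set (Set Y), F ⊆ L → ⋂₀ F ∈ L := by
  intro F
  refine Set.Finite.induction_on (motive := fun F _ => F ⊆ L → ⋂₀ F ∈ L) F (Set.toFinite F)
    (fun _ => by simpa using hL.1) ?_
  intro a s _ _ ih hFL
  rw [Set.sInter_insert]
  exact hL.2 _ (hFL (Set.mem_insert _ _)) _
    (ih fun x hx => hFL (Set.mem_insert_of_mem _ hx))

lemma latHull_mem (hL : IsYLattice L) (A : Set Y) : latHull L A ∈ L :=
  sInter_mem_lat hL _ fun _ hB => hB.1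
end

section main
variable {Y : Type} [Fintype Y] {L : Set (Set Y)}

/-- A minimal generating set is shattered. -/
lemma shatters_of_min (hL : IsYLattice L) {A B : Set Y} (hA : A ⊆ latHull L B)
    (hmin : ∀ b ∈ B, ¬ A ⊆ latHull L (B \ {b})) :
    ∀ B' ⊆ B, ∃ C ∈ L, B ∩ C = B' := by
  intro B' hB'
  refine ⟨latHull L B', latHull_mem hL _, Set.Subset.antisymm ?_
    fun x hx => ⟨hB' hx, subset_latHull _ hx⟩⟩
  rintro x ⟨hxB, hxH⟩
  by_contra hxB'
  have h1 : B' ⊆ B \ {x} := fun y hy => ⟨hB' hy, fun he => hxB' (he ▸ hy)⟩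
  have h3 : B ⊆ latHull L (B \ {x}) := by
    intro y hy
    by_cases hyx : y = x
    · exact hyx ▸ latHull_mono h1 hxH
    · exact subset_latHull _ ⟨hy, hyx⟩
  exact hmin x hxB (hA.trans (latHull_subset (latHull_mem hL _) h3))


/-- there exists a shattered set of size latComplexity -/
lemma exists_shattered (hL : IsYLattice L) (A : Set Y) :
    ∃ S : Set Y, (∀ B' ⊆ S, ∃ C ∈ L, S ∩ C = B') ∧ S.ncard = latComplexity L A := by
  have hne : A.ncard ∈ {n : ℕ | ∃ B : Set Y, B ⊆ A ∧ B.ncard = n ∧ A ⊆ latHull L B} :=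
    ⟨A, subset_rfl, rfl, subset_latHull A⟩
  obtain ⟨B, hBA, hBn, hBh⟩ := Nat.sInf_mem ⟨A.ncard, hne⟩
  refine ⟨B, shatters_of_min hL hBh ?_, hBn⟩
  intro b hb hcon
  have hlt : (B \ {b}).ncard < B.ncard := by
    have : (B \ {b}).ncard = B.ncard - 1 := by
      rw [Set.ncard_diff_singleton_of_mem hb]
    have hpos : 0 < B.ncard := (Set.ncard_pos (Set.toFinite B)).2 ⟨b, hb⟩
    omega
  have : (B \ {b}).ncard ∈ {n : ℕ | ∃ B : Set Y, B ⊆ A ∧ B.ncard = n ∧ A ⊆ latHull L B} :=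
    ⟨B \ {b}, (Set.diff_subset).trans hBA, rfl, hcon⟩
  have := Nat.sInf_le this
  omega

/-- a shattered set has complexity equal to its cardinality -/
lemma complexity_of_shattered {S : Set Y} (hS : ∀ B' ⊆ S, ∃ C ∈ L, S ∩ C = B') :
    latComplexity L S = S.ncard := by
  have key : ∀ B ⊆ S, S ⊆ latHull L B → B = S := by
    intro B hBS hSh
    by_contra hne
    obtain ⟨b, hbS, hbB⟩ := Set.exists_of_ssubset (hBS.ssubset_of_ne hne)
    obtain ⟨C, hCL, hC⟩ := hS (S \ {b}) Set.diff_subset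
    have hBC : B ⊆ C := by
      intro y hy
      have : y ∈ S \ {b} := ⟨hBS hy, fun he => hbB (he ▸ hy)⟩
      rw [← hC] at this; exact this.2
    have : b ∈ S ∩ C := ⟨hbS, latHull_subset hCL hBC (hSh hbS)⟩
    rw [hC] at this
    exact this.2 rfl
  apply le_antisymm
  · exact Nat.sInf_le ⟨S, subset_rfl, rfl, subset_latHull S⟩
  · refine le_csInf ⟨S.ncard, S, subset_rfl, rfl, subset_latHull S⟩ ?_
    rintro n ⟨B, hBS, hBn, hSh⟩
    rw [← hBn, key B hBS hSh]
end main


/-- For any `Y`-lattice `Λ` on a finite set `Y`, the VC dimension of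
`Λ` equals the maximum over all subsets `A ⊆ Y` of the `Λ`-complexity of `A`. -/
theorem vcDim_eq_max_latComplexity {Y : Type} [Fintype Y] (L : Set (Set Y))
    (hL : IsYLattice L) :
    VCdim L = sSup {n : ℕ | ∃ A : Set Y, n = latComplexity L A} := by
  have hset : {n : ℕ | ∃ S : Set Y, Shatters L S ∧ S.ncard = n}
      = {n : ℕ | ∃ A : Set Y, n = latComplexity L A} := by
    ext n
    constructor
    · rintro ⟨S, hS, rfl⟩
      exact ⟨S, (complexity_of_shattered hS).symm⟩
    · rintro ⟨A, rfl⟩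
      obtain ⟨S, hS, hn⟩ := exists_shattered hL A
      exact ⟨S, hS, hn⟩
  rw [VCdim, hset]
end

section
/- For each n ≥ 1, let X = [n], Y = {0,1}, and for k < n define h_k : [n] → 2^{{0,1}} by h_k(x) = {1} if x = k and h_k(x) = {0,1} otherwise. Let H_n = {h_k : k < n}. Then there exists an ambiguous shattered H_n-tree of depth at most n² and rank n − 1; consequently AL(H_n, n²) = n − 1 (using the upper bound AL ≤ |H| − 1). -/
/-- A finite rooted tree: vertices, a root, and a parent map under which every
vertex reaches the root. -/
structure RTree where
  V : Type
  [fin : Fintype V]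
  root : V
  parent : V → V
  parent_root : parent root = root
  reaches : ∀ v : V, ∃ k : ℕ, parent^[k] v = root

namespace RTree

/-- Children of a vertex (the root is not a child of anything). -/
def children (t : RTree) (v : t.V) : Set t.V := {w | t.parent w = v ∧ w ≠ t.root}

def IsLeaf (t : RTree) (v : t.V) : Prop := t.children v = ∅

/-- `a` is an ancestor (or equal to) `u`. -/
def Anc (t : RTree) (a u : t.V) : Prop := ∃ k : ℕ, t.parent^[k] u = a

noncomputable def depthOf (t : RTree) (v : t.V) : ℕ := sInf {k : ℕ | t.parent^[k] v = t.root}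

noncomputable def depth (t : RTree) : ℕ := sSup {n : ℕ | ∃ v : t.V, n = t.depthOf v}

end RTree

/-- An ambiguous shattered `H`-tree: internal vertices carry instances, non-root
vertices (identified with the edges to their parents) carry labels, distinct among
siblings, leaves carry hypotheses from `H` compatible with all edge labels above
them, and `E0` selects exactly one child edge of each internal vertex. -/
structure AmbTree (X Y : Type) (H : Set (X → Set Y)) where
  t : RTree
  xlab : t.V → X
  ylab : t.V → Y
  hlab : t.V → (X → Set Y)
  E0 : Set t.V
  e0_ne_root : ∀ a ∈ E0, a ≠ t.root
  e0_unique : ∀ v : t.V, (t.children v).Nonempty → ∃! a : t.V, a ∈ t.children v ∩ E0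
  sib_distinct : ∀ a b : t.V, a ≠ t.root → b ≠ t.root →
    t.parent a = t.parent b → a ≠ b → ylab a ≠ ylab b
  hlab_mem : ∀ u : t.V, t.IsLeaf u → hlab u ∈ H
  path_mem : ∀ u a : t.V, t.IsLeaf u → t.Anc a u → a ≠ t.root →
    ylab a ∈ hlab u (xlab (t.parent a))

namespace AmbTree

variable {X Y : Type} {H : Set (X → Set Y)}

/-- Edge `a` (on the root-to-`u` path) is relevant to leaf `u`. -/
def Relevant (T : AmbTree X Y H) (a u : T.t.V) : Prop :=
  a ≠ T.t.root ∧ T.t.Anc a u ∧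
    (a ∉ T.E0 ∨ ∃ b : T.t.V, T.t.parent b = T.t.parent a ∧ b ≠ T.t.root ∧
      T.ylab b ∉ T.hlab u (T.xlab (T.t.parent a)))

noncomputable def relCount (T : AmbTree X Y H) (u : T.t.V) : ℕ :=
  {a : T.t.V | T.Relevant a u}.ncard

/-- Rank: the minimum over leaves of the number of relevant edges. -/
noncomputable def rank (T : AmbTree X Y H) : ℕ :=
  sInf {n : ℕ | ∃ u : T.t.V, T.t.IsLeaf u ∧ n = T.relCount u}

noncomputable def depth (T : AmbTree X Y H) : ℕ := T.t.depth

end AmbTree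

/-- `AL(H, N)`: the maximal rank of an ambiguous shattered `H`-tree of depth at most `N`. -/
noncomputable def ALn (X Y : Type) (H : Set (X → Set Y)) (N : ℕ) : ℕ :=
  sSup {r : ℕ | ∃ T : AmbTree X Y H, T.depth ≤ N ∧ r = T.rank}

/-- The hypothesis class of Example `ex_fin_deltas`: `h_k x = {1}` if `x = k`,
and `{0,1}` otherwise (labels `Bool`, with `1 = true`). -/
def Hdeltas (n : ℕ) : Set (Fin n → Set Bool) :=
  {h | ∃ k : Fin n, h = fun x => if x = k then {true} else Set.univ}


namespace RTree

variable {t : RTree}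

lemma anc_refl (v : t.V) : t.Anc v v := ⟨0, rfl⟩

lemma anc_root (v : t.V) : t.Anc t.root v := t.reaches v

lemma anc_trans {a b c : t.V} (h1 : t.Anc a b) (h2 : t.Anc b c) : t.Anc a c := by
  obtain ⟨i, hi⟩ := h1; obtain ⟨j, hj⟩ := h2
  exact ⟨i + j, by rw [Function.iterate_add_apply, hj, hi]⟩

lemma anc_parent_of_anc {a c : t.V} (h : t.Anc a (t.parent c)) : t.Anc a c := by
  obtain ⟨i, hi⟩ := h; exact ⟨i + 1, by rw [Function.iterate_succ_apply, hi]⟩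

lemma anc_parent_self (c : t.V) : t.Anc (t.parent c) c := ⟨1, rfl⟩

lemma parent_iter_depthOf (v : t.V) : t.parent^[t.depthOf v] v = t.root :=
  Nat.sInf_mem (t.reaches v)

lemma depthOf_le {v : t.V} {k : ℕ} (h : t.parent^[k] v = t.root) : t.depthOf v ≤ k :=
  Nat.sInf_le h

lemma depthOf_eq_zero_iff {v : t.V} : t.depthOf v = 0 ↔ v = t.root := by
  constructor
  · intro h
    have := parent_iter_depthOf v
    rwa [h] at this
  · intro h
    subst h
    exact Nat.le_zero.1 (depthOf_le (k := 0) rfl)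

lemma depthOf_parent {v : t.V} (h : v ≠ t.root) : t.depthOf (t.parent v) + 1 = t.depthOf v := by
  have hpos : 0 < t.depthOf v := by
    rcases Nat.eq_zero_or_pos (t.depthOf v) with h0 | h0
    · exact absurd (depthOf_eq_zero_iff.1 h0) h
    · exact h0
  have h1 : t.depthOf (t.parent v) ≤ t.depthOf v - 1 := by
    apply depthOf_le
    have := parent_iter_depthOf v
    rwa [show t.depthOf v = (t.depthOf v - 1) + 1 by omega, Function.iterate_succ_apply] at this
  have h2 : t.depthOf v ≤ t.depthOf (t.parent v) + 1 := by
    apply depthOf_le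
    rw [Function.iterate_succ_apply, parent_iter_depthOf]
  omega

lemma iter_root (k : ℕ) : t.parent^[k] t.root = t.root := by
  induction k with
  | zero => rfl
  | succ k ih => rw [Function.iterate_succ_apply, t.parent_root, ih]

lemma iter_eq_root_of_ge {v : t.V} {k : ℕ} (h : t.depthOf v ≤ k) : t.parent^[k] v = t.root := by
  rw [show k = (k - t.depthOf v) + t.depthOf v by omega, Function.iterate_add_apply,
    parent_iter_depthOf, iter_root]

lemma depthOf_iter {v : t.V} {i : ℕ} (h : i ≤ t.depthOf v) :
    t.depthOf (t.parent^[i] v) = t.depthOf v - i := by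
  induction i with
  | zero => simp
  | succ i ih =>
    have hi : i ≤ t.depthOf v := by omega
    have hne : t.parent^[i] v ≠ t.root := by
      intro hcon
      have := depthOf_le hcon
      omega
    have := depthOf_parent hne
    rw [Function.iterate_succ_apply'] at *
    rw [ih hi] at this
    omega

lemma anc_index {a u : t.V} (h : t.Anc a u) (ha : a ≠ t.root) :
    t.depthOf a ≤ t.depthOf u ∧ t.parent^[t.depthOf u - t.depthOf a] u = a := by
  obtain ⟨i, hi⟩ := h
  have hile : i ≤ t.depthOf u := by
    by_contra hcon
    exact ha (hi ▸ iter_eq_root_of_ge (by omega))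
  have hd : t.depthOf a = t.depthOf u - i := hi ▸ depthOf_iter hile
  have : t.depthOf u - t.depthOf a = i := by omega
  exact ⟨by omega, by rw [this, hi]⟩

lemma anc_depth_le {a u : t.V} (h : t.Anc a u) : t.depthOf a ≤ t.depthOf u := by
  rcases eq_or_ne a t.root with rfl | ha
  · rw [depthOf_eq_zero_iff.2 rfl]; omega
  · exact (anc_index h ha).1

lemma anc_unique {a b u : t.V} (h1 : t.Anc a u) (h2 : t.Anc b u)
    (hd : t.depthOf a = t.depthOf b) (ha : a ≠ t.root) (hb : b ≠ t.root) : a = b := by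
  obtain ⟨_, e1⟩ := anc_index h1 ha
  obtain ⟨_, e2⟩ := anc_index h2 hb
  rw [← e1, ← e2, hd]

lemma anc_of_anc_of_depth_le {a b u : t.V} (h1 : t.Anc a u) (h2 : t.Anc b u)
    (hb : b ≠ t.root) (hd : t.depthOf a ≤ t.depthOf b) : t.Anc a b := by
  rcases eq_or_ne a t.root with rfl | ha
  · exact anc_root b
  obtain ⟨l1, e1⟩ := anc_index h1 ha
  obtain ⟨l2, e2⟩ := anc_index h2 hb
  refine ⟨(t.depthOf u - t.depthOf a) - (t.depthOf u - t.depthOf b), ?_⟩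
  have h3 : t.parent^[(t.depthOf u - t.depthOf a) - (t.depthOf u - t.depthOf b)]
      (t.parent^[t.depthOf u - t.depthOf b] u) = a := by
    rw [← Function.iterate_add_apply]
    rw [show (t.depthOf u - t.depthOf a) - (t.depthOf u - t.depthOf b) +
      (t.depthOf u - t.depthOf b) = t.depthOf u - t.depthOf a by omega]
    exact e1
  rw [e2] at h3
  exact h3

/-- key comparability: if `c` is the on-path child of `v` toward `u`, any on-path
vertex `p` below `v` is `v` itself or below `c`. -/
lemma anc_split {v c p u : t.V} (hvp : t.Anc v p) (hpu : t.Anc p u) (hcu : t.Anc c u)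
    (hc : t.parent c = v) (hcr : c ≠ t.root) : p = v ∨ t.Anc c p := by
  have hdc : t.depthOf v + 1 = t.depthOf c := by rw [← hc]; exact depthOf_parent hcr
  rcases eq_or_ne p t.root with rfl | hp
  · left
    have : t.depthOf v = 0 := by have := anc_depth_le hvp; rw [depthOf_eq_zero_iff.2 rfl] at this; omega
    have hv := depthOf_eq_zero_iff.1 this
    rw [hv]
  · have hvd : t.depthOf v ≤ t.depthOf p := anc_depth_le hvp
    rcases Nat.lt_or_ge (t.depthOf p) (t.depthOf c) with hlt | hge
    · left
      rcases eq_or_ne v t.root with rfl | hv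
      · have : t.depthOf p = 0 := by
          have := depthOf_eq_zero_iff.2 (rfl : t.root = t.root); omega
        exact depthOf_eq_zero_iff.1 this
      · exact anc_unique hpu (anc_trans hvp hpu) (by omega) hp hv
    · right
      exact anc_of_anc_of_depth_le hcu hpu hp (by omega)

lemma depthOf_lt_card (v : t.V) : t.depthOf v < Nat.card t.V := by
  haveI := t.fin
  rw [Nat.card_eq_fintype_card]
  have hinj : Function.Injective (fun i : Fin (t.depthOf v + 1) => t.parent^[i] v) := by
    intro i j hij
    have di := depthOf_iter (v := v) (i := i) (by omega)
    have dj := depthOf_iter (v := v) (i := j) (by omega)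
    simp only at hij
    rw [hij] at di
    ext
    omega
  have := Fintype.card_le_of_injective _ hinj
  simp at this
  omega

lemma not_leaf_iff {v : t.V} : ¬ t.IsLeaf v ↔ (t.children v).Nonempty := by
  rw [IsLeaf, Set.nonempty_iff_ne_empty]

end RTree

def hfun {n : ℕ} (k : Fin n) : Fin n → Set Bool := fun x => if x = k then {true} else Set.univ

lemma hfun_mem_Hdeltas {n : ℕ} (k : Fin n) : hfun k ∈ Hdeltas n := ⟨k, rfl⟩

lemma true_mem_hfun {n : ℕ} (k x : Fin n) : true ∈ hfun k x := by
  unfold hfun; split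
  · rfl
  · trivial

lemma not_mem_hfun_iff {n : ℕ} {k x : Fin n} {y : Bool} :
    y ∉ hfun k x ↔ y = false ∧ x = k := by
  unfold hfun; split
  · rename_i h
    subst h
    constructor
    · intro hy
      cases y
      · exact ⟨rfl, rfl⟩
      · exact absurd rfl hy
    · rintro ⟨rfl, _⟩
      simp
  · rename_i h
    simp [Set.mem_univ, h]

namespace AmbTree

lemma walk {n : ℕ} (T : AmbTree (Fin n) Bool (Hdeltas n)) (m : ℕ) :
    ∀ (v : T.t.V) (A : Finset (Fin n)),
    Nat.card T.t.V ≤ m + T.t.depthOf v →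
    (∀ α ∈ A, ∃ a : T.t.V, a ≠ T.t.root ∧ T.t.Anc a v ∧ T.ylab a = false ∧
      T.xlab (T.t.parent a) = α) →
    ∃ (u : T.t.V) (k : Fin n), T.t.IsLeaf u ∧ T.t.Anc v u ∧ T.hlab u = hfun k ∧ k ∉ A ∧
      (∀ a : T.t.V, T.Relevant a u → T.t.Anc v (T.t.parent a) →
        T.xlab (T.t.parent a) ∉ A ∧ T.xlab (T.t.parent a) ≠ k) ∧
      Set.InjOn (fun a => T.xlab (T.t.parent a))
        {a : T.t.V | T.Relevant a u ∧ T.t.Anc v (T.t.parent a)} := by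
  induction m with
  | zero =>
    intro v A hcard _
    exact absurd hcard (by have := RTree.depthOf_lt_card (t := T.t) v; omega)
  | succ m ih =>
    intro v A hcard hA
    by_cases hleaf : T.t.IsLeaf v
    · -- base case: v is a leaf
      obtain ⟨k, hk⟩ := T.hlab_mem v hleaf
      have hemp : ∀ a : T.t.V, T.Relevant a v → ¬ T.t.Anc v (T.t.parent a) := by
        intro a hrel hanc
        obtain ⟨har, hav, _⟩ := hrel
        have h1 : T.t.depthOf a ≤ T.t.depthOf v := RTree.anc_depth_le hav
        have h2 : T.t.depthOf v ≤ T.t.depthOf (T.t.parent a) := RTree.anc_depth_le hanc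
        have h3 := RTree.depthOf_parent har
        omega
      refine ⟨v, k, hleaf, RTree.anc_refl v, hk, ?_, ?_, ?_⟩
      · intro hkA
        obtain ⟨a, har, hav, hyl, hxl⟩ := hA k hkA
        have hp := T.path_mem v a hleaf hav har
        rw [hk, hxl, hyl] at hp
        exact (not_mem_hfun_iff.2 ⟨rfl, rfl⟩) hp
      · intro a hrel hanc
        exact absurd hanc (hemp a hrel)
      · intro a ha _ _ _
        exact absurd ha.2 (hemp a ha.1)
    · -- inductive step: v is internal
      have hch : (T.t.children v).Nonempty := RTree.not_leaf_iff.1 hleaf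
      obtain ⟨c0, hc0, _⟩ := T.e0_unique v hch
      have hpc : T.t.parent c0 = v := hc0.1.1
      have hcr : c0 ≠ T.t.root := hc0.1.2
      have hE0 : c0 ∈ T.E0 := hc0.2
      by_cases hcase : (∃ f ∈ T.t.children v, T.ylab f = false) ∧ T.xlab v ∉ A
      · -- take a false child, spending instance xlab v
        obtain ⟨⟨f, hf, hyf⟩, hxvA⟩ := hcase
        have hpf : T.t.parent f = v := hf.1
        have hfr : f ≠ T.t.root := hf.2
        have hvf : T.t.Anc v f := by
          have := RTree.anc_parent_self (t := T.t) f; rwa [hpf] at this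
        have hdf : T.t.depthOf v + 1 = T.t.depthOf f := by
          have := RTree.depthOf_parent (t := T.t) hfr; rw [hpf] at this; exact this
        have hA' : ∀ α ∈ insert (T.xlab v) A, ∃ a : T.t.V, a ≠ T.t.root ∧ T.t.Anc a f ∧
            T.ylab a = false ∧ T.xlab (T.t.parent a) = α := by
          intro α hα
          rcases Finset.mem_insert.1 hα with rfl | hαA
          · exact ⟨f, hfr, RTree.anc_refl f, hyf, by rw [hpf]⟩
          · obtain ⟨a, h1, h2, h3, h4⟩ := hA α hαA
            exact ⟨a, h1, RTree.anc_trans h2 hvf, h3, h4⟩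
        obtain ⟨u, k, hu, hfu, hk, hkA', hclause, hinj⟩ :=
          ih f (insert (T.xlab v) A) (by omega) hA'
        have hvu : T.t.Anc v u := RTree.anc_trans hvf hfu
        have hkA : k ∉ A := fun h => hkA' (Finset.mem_insert_of_mem h)
        have hkxv : T.xlab v ≠ k := fun h => hkA' (h ▸ Finset.mem_insert_self _ _)
        have hdich : ∀ a : T.t.V, T.Relevant a u → T.t.Anc v (T.t.parent a) →
            a = f ∨ T.t.Anc f (T.t.parent a) := by
          intro a hrel hanc
          obtain ⟨har, hau, _⟩ := hrel
          have hpau : T.t.Anc (T.t.parent a) u :=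
            RTree.anc_trans (RTree.anc_parent_self a) hau
          rcases RTree.anc_split hanc hpau hfu hpf hfr with h | h
          · left
            have hda := RTree.depthOf_parent (t := T.t) har
            rw [h] at hda
            exact RTree.anc_unique hau hfu (by omega) har hfr
          · right; exact h
        refine ⟨u, k, hu, hvu, hk, hkA, ?_, ?_⟩
        · intro a hrel hanc
          rcases hdich a hrel hanc with rfl | h
          · rw [hpf]
            exact ⟨hxvA, hkxv⟩
          · have := hclause a hrel h
            exact ⟨fun hmem => this.1 (Finset.mem_insert_of_mem hmem), this.2⟩
        · intro a ha b hb heq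
          simp only [Set.mem_setOf_eq] at ha hb
          simp only at heq
          rcases hdich a ha.1 ha.2 with rfl | hba
          · rcases hdich b hb.1 hb.2 with rfl | hbb
            · rfl
            · exfalso
              apply (hclause b hb.1 hbb).1
              rw [← heq, hpf]
              exact Finset.mem_insert_self _ _
          · rcases hdich b hb.1 hb.2 with rfl | hbb
            · exfalso
              apply (hclause a ha.1 hba).1
              rw [heq, hpf]
              exact Finset.mem_insert_self _ _
            · exact hinj (Set.mem_setOf_eq ▸ ⟨ha.1, hba⟩) (Set.mem_setOf_eq ▸ ⟨hb.1, hbb⟩) heq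
      · -- take the E0 child
        push_neg at hcase
        have hvc : T.t.Anc v c0 := by
          have := RTree.anc_parent_self (t := T.t) c0; rwa [hpc] at this
        have hdc : T.t.depthOf v + 1 = T.t.depthOf c0 := by
          have := RTree.depthOf_parent (t := T.t) hcr; rw [hpc] at this; exact this
        have hA' : ∀ α ∈ A, ∃ a : T.t.V, a ≠ T.t.root ∧ T.t.Anc a c0 ∧
            T.ylab a = false ∧ T.xlab (T.t.parent a) = α := by
          intro α hα
          obtain ⟨a, h1, h2, h3, h4⟩ := hA α hα
          exact ⟨a, h1, RTree.anc_trans h2 hvc, h3, h4⟩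
        obtain ⟨u, k, hu, hcu, hk, hkA, hclause, hinj⟩ := ih c0 A (by omega) hA'
        have hnotrel : ¬ T.Relevant c0 u := by
          rintro ⟨_, _, hor⟩
          rcases hor with h | ⟨b, hpb, hbr, hby⟩
          · exact h hE0
          · rw [hk, hpc] at hby
            obtain ⟨hbf, hxk⟩ := not_mem_hfun_iff.1 hby
            have hbch : b ∈ T.t.children v := ⟨by rw [hpb, hpc], hbr⟩
            exact hkA (hxk ▸ hcase ⟨b, hbch, hbf⟩)
        have hdich : ∀ a : T.t.V, T.Relevant a u → T.t.Anc v (T.t.parent a) →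
            T.t.Anc c0 (T.t.parent a) := by
          intro a hrel hanc
          have har := hrel.1
          have hau := hrel.2.1
          have hpau : T.t.Anc (T.t.parent a) u :=
            RTree.anc_trans (RTree.anc_parent_self a) hau
          rcases RTree.anc_split hanc hpau hcu hpc hcr with h | h
          · exfalso
            have hda := RTree.depthOf_parent (t := T.t) har
            rw [h] at hda
            have : a = c0 := RTree.anc_unique hau hcu (by omega) har hcr
            exact hnotrel (this ▸ hrel)
          · exact h
        refine ⟨u, k, hu, RTree.anc_trans hvc hcu, hk, hkA,
          fun a hrel hanc => hclause a hrel (hdich a hrel hanc), ?_⟩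
        exact hinj.mono (fun a ha => show _ ∧ _ from ⟨ha.1, hdich a ha.1 ha.2⟩)

end AmbTree

namespace AmbTree

lemma rank_le {n : ℕ} (T : AmbTree (Fin n) Bool (Hdeltas n)) : T.rank ≤ n - 1 := by
  obtain ⟨u, k, hu, _, _, _, hclause, hinj⟩ :=
    T.walk (Nat.card T.t.V) T.t.root ∅
      (by have h0 : T.t.depthOf T.t.root = 0 := RTree.depthOf_eq_zero_iff.2 rfl; omega)
      (by simp)
  have hsub : {a : T.t.V | T.Relevant a u} ⊆
      {a : T.t.V | T.Relevant a u ∧ T.t.Anc T.t.root (T.t.parent a)} :=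
    fun a ha => ⟨ha, RTree.anc_root _⟩
  have hmaps : ∀ a ∈ {a : T.t.V | T.Relevant a u},
      T.xlab (T.t.parent a) ∈ ({k}ᶜ : Set (Fin n)) := by
    intro a ha
    exact (hclause a ha (RTree.anc_root _)).2
  have hcount : T.relCount u ≤ ({k}ᶜ : Set (Fin n)).ncard := by
    apply Set.ncard_le_ncard_of_injOn _ hmaps (hinj.mono hsub) (Set.toFinite _)
  have hcompl : ({k}ᶜ : Set (Fin n)).ncard = n - 1 := by
    rw [Set.ncard_eq_toFinset_card', Set.toFinset_compl, Set.toFinset_singleton,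
      Finset.card_compl, Finset.card_singleton, Fintype.card_fin]
  have hle : T.relCount u ≤ n - 1 := by rw [← hcompl]; exact hcount
  exact le_trans (Nat.sInf_le ⟨u, hu, rfl⟩) hle

end AmbTree

namespace Construction
open List

/-- target depth -/
abbrev D (n : ℕ) : ℕ := (n - 1) * (n - 1)

lemma dropLast_iter (k : ℕ) (l : List Bool) :
    List.dropLast^[k] l = l.take (l.length - k) := by
  induction k with
  | zero => simp
  | succ k ih =>
    rw [Function.iterate_succ_apply', ih, dropLast_eq_take, length_take, take_take]
    congr 1
    omega

@[reducible] def Vt (n : ℕ) : Type := {p : List Bool // p.length ≤ D n}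

noncomputable instance (n : ℕ) : Fintype (Vt n) := (List.finite_length_le Bool (D n)).fintype

def rootV (n : ℕ) : Vt n := ⟨[], by simp⟩

def parentV (n : ℕ) (v : Vt n) : Vt n :=
  ⟨v.1.dropLast, le_trans (by rw [length_dropLast]; omega) v.2⟩

lemma parentV_iter (n k : ℕ) (v : Vt n) :
    ((parentV n)^[k] v).1 = v.1.take (v.1.length - k) := by
  have : ∀ (w : Vt n), ((parentV n)^[k] w).1 = List.dropLast^[k] w.1 := by
    intro w
    induction k with
    | zero => simp
    | succ k ih =>
      rw [Function.iterate_succ_apply', Function.iterate_succ_apply', ← ih]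
      rfl
  rw [this, dropLast_iter]

@[reducible] noncomputable def tr (n : ℕ) : RTree where
  V := Vt n
  root := rootV n
  parent := parentV n
  parent_root := Subtype.ext rfl
  reaches v := ⟨v.1.length, Subtype.ext (by rw [parentV_iter]; simp [rootV])⟩

lemma eq_root_iff {n : ℕ} (v : Vt n) : v = (tr n).root ↔ v.1 = [] := by
  rw [Subtype.ext_iff]; rfl

lemma parent_eq {n : ℕ} (v : Vt n) : ((tr n).parent v).1 = v.1.dropLast := rfl

lemma mem_children_iff {n : ℕ} {v w : Vt n} :
    w ∈ (tr n).children v ↔ w.1.dropLast = v.1 ∧ w.1 ≠ [] := by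
  have h0 : w ∈ (tr n).children v ↔ (tr n).parent w = v ∧ w ≠ (tr n).root := Iff.rfl
  rw [h0, Subtype.ext_iff, parent_eq, Ne, Subtype.ext_iff]
  exact Iff.rfl

lemma children_concat {n : ℕ} {v w : Vt n} (h : w ∈ (tr n).children v) :
    ∃ b : Bool, w.1 = v.1 ++ [b] := by
  obtain ⟨h1, h2⟩ := mem_children_iff.1 h
  exact ⟨w.1.getLast h2, by rw [← h1, dropLast_append_getLast h2]⟩

lemma depthOf_eq {n : ℕ} (v : Vt n) : (tr n).depthOf v = v.1.length := by
  unfold RTree.depthOf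
  have : {k : ℕ | (tr n).parent^[k] v = (tr n).root} = Set.Ici v.1.length := by
    ext k
    simp only [Set.mem_setOf_eq, Set.mem_Ici]
    rw [Subtype.ext_iff]
    show ((parentV n)^[k] v).1 = (rootV n).1 ↔ _
    rw [parentV_iter]
    show _ = ([] : List Bool) ↔ _
    rw [take_eq_nil_iff]
    constructor
    · rintro (h | h)
      · omega
      · rw [h]; simp
    · intro h
      left; omega
  rw [this, csInf_Ici]

lemma isLeaf_iff {n : ℕ} (v : Vt n) : (tr n).IsLeaf v ↔ v.1.length = D n := by
  constructor
  · intro h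
    by_contra hlt
    have hlt' : v.1.length < D n := lt_of_le_of_ne v.2 hlt
    have : (⟨v.1 ++ [true], by rw [length_append]; simpa using hlt'⟩ : Vt n)
        ∈ (tr n).children v := by
      rw [mem_children_iff]
      exact ⟨dropLast_concat, by simp⟩
    rw [RTree.IsLeaf] at h
    rw [h] at this
    exact this
  · intro h
    rw [RTree.IsLeaf, Set.eq_empty_iff_forall_notMem]
    intro w hw
    obtain ⟨b, hb⟩ := children_concat hw
    have := w.2
    rw [hb, length_append] at this
    simp at this
    omega

lemma depth_eq {n : ℕ} : (tr n).depth = D n := by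
  unfold RTree.depth
  have : {m : ℕ | ∃ v : (tr n).V, m = (tr n).depthOf v} = Set.Iic (D n) := by
    ext m
    simp only [Set.mem_setOf_eq, Set.mem_Iic]
    constructor
    · rintro ⟨v, rfl⟩
      rw [depthOf_eq]
      exact v.2
    · intro h
      exact ⟨⟨List.replicate m true, by simpa using h⟩, by rw [depthOf_eq]; simp⟩
  rw [this, csSup_Iic]

end Construction

namespace Construction
open List

lemma tr_parent_iter {n : ℕ} (k : ℕ) (u : Vt n) :
    ((tr n).parent^[k] u).1 = u.1.take (u.1.length - k) := parentV_iter n k u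

open scoped Classical in
noncomputable def kNat (n : ℕ) (p : List Bool) : ℕ :=
  if h : ∃ m, m < n - 1 ∧
      ∀ i ∈ Finset.Ico (m * (n - 1)) ((m + 1) * (n - 1)), p.getD i false = true
  then h.choose else n - 1

lemma kNat_lt (n : ℕ) (hn : 0 < n) (p : List Bool) : kNat n p < n := by
  unfold kNat
  split
  · rename_i h
    have := h.choose_spec.1
    omega
  · omega

lemma kNat_pos_spec {n : ℕ} {p : List Bool}
    (h : ∃ m, m < n - 1 ∧
      ∀ i ∈ Finset.Ico (m * (n - 1)) ((m + 1) * (n - 1)), p.getD i false = true) :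
    kNat n p < n - 1 ∧
      ∀ i ∈ Finset.Ico (kNat n p * (n - 1)) ((kNat n p + 1) * (n - 1)),
        p.getD i false = true := by
  unfold kNat
  rw [dif_pos h]
  exact h.choose_spec

lemma kNat_neg {n : ℕ} {p : List Bool}
    (h : ¬ ∃ m, m < n - 1 ∧
      ∀ i ∈ Finset.Ico (m * (n - 1)) ((m + 1) * (n - 1)), p.getD i false = true) :
    kNat n p = n - 1 := by
  unfold kNat
  rw [dif_neg h]

def ylabV (n : ℕ) (v : Vt n) : Bool := v.1.getLast?.getD true

lemma ylabV_concat {n : ℕ} {v : Vt n} {q : List Bool} {b : Bool} (h : v.1 = q ++ [b]) :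
    ylabV n v = b := by
  unfold ylabV; rw [h, getLast?_concat]; rfl

def xlabV (n : ℕ) (hn : 0 < n) (v : Vt n) : Fin n :=
  ⟨min (v.1.length / (n - 1)) (n - 1), lt_of_le_of_lt (Nat.min_le_right _ _) (by omega)⟩

lemma anc_iff_prefix {n : ℕ} {a u : Vt n} :
    (tr n).Anc a u ↔ ∃ m, m ≤ u.1.length ∧ a.1 = u.1.take m := by
  constructor
  · rintro ⟨j, hj⟩
    refine ⟨u.1.length - j, by omega, ?_⟩
    rw [← hj, tr_parent_iter]
  · rintro ⟨m, hm, ha⟩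
    refine ⟨u.1.length - m, Subtype.ext ?_⟩
    rw [tr_parent_iter, ha]
    congr 1
    omega

lemma ylab_take {n : ℕ} (u a : Vt n) (i : ℕ) (hi : i < u.1.length)
    (ha : a.1 = u.1.take (i + 1)) : ylabV n a = u.1.getD i false := by
  unfold ylabV
  rw [ha, getLast?_eq_getElem?, length_take]
  have hmin : min (i + 1) u.1.length = i + 1 := by omega
  rw [hmin]
  simp only [Nat.add_sub_cancel]
  rw [getElem?_take_of_lt (by omega), getD_eq_getElem?_getD,
    List.getElem?_eq_getElem hi]
  rfl

lemma parent_take_len {n : ℕ} {a u : Vt n} {i : ℕ} (hi : i < u.1.length)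
    (ha : a.1 = u.1.take (i + 1)) : ((tr n).parent a).1.length = i := by
  rw [parent_eq, length_dropLast, ha, length_take]
  omega

lemma xlab_parent_take {n : ℕ} (hn : 0 < n) {a u : Vt n} {i : ℕ} (hi : i < u.1.length)
    (ha : a.1 = u.1.take (i + 1)) :
    (xlabV n hn ((tr n).parent a)).1 = min (i / (n - 1)) (n - 1) := by
  show min (((tr n).parent a).1.length / (n - 1)) (n - 1) = _
  rw [parent_take_len hi ha]

lemma block_mem_of_div {i n k : ℕ} (hn : 1 < n) (h : i / (n - 1) = k) :
    i ∈ Finset.Ico (k * (n - 1)) ((k + 1) * (n - 1)) := by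
  have h1 := Nat.div_add_mod i (n - 1)
  have h2 : i % (n - 1) < n - 1 := Nat.mod_lt _ (by omega)
  rw [Finset.mem_Ico]
  constructor
  · calc k * (n - 1) = (n - 1) * (i / (n - 1)) := by rw [h]; ring
    _ ≤ i := by omega
  · calc i = (n - 1) * (i / (n - 1)) + i % (n - 1) := by omega
    _ < (k + 1) * (n - 1) := by rw [h]; ring_nf; omega

lemma div_of_block_mem {i n k : ℕ} (hn : 1 < n)
    (h : i ∈ Finset.Ico (k * (n - 1)) ((k + 1) * (n - 1))) : i / (n - 1) = k := by
  rw [Finset.mem_Ico] at h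
  exact Nat.div_eq_of_lt_le h.1 h.2

lemma path_mem_aux (n : ℕ) (hn : 0 < n) :
    ∀ u a : Vt n, (tr n).IsLeaf u → (tr n).Anc a u → a ≠ (tr n).root →
    ylabV n a ∈ hfun ⟨kNat n u.1, kNat_lt n hn u.1⟩ (xlabV n hn ((tr n).parent a)) := by
  intro u a hu hanc har
  have hlen := (isLeaf_iff u).1 hu
  obtain ⟨m, hm, ha⟩ := anc_iff_prefix.1 hanc
  have ha' : a.1 ≠ [] := fun h => har ((eq_root_iff a).2 h)
  have hm0 : m ≠ 0 := by rintro rfl; simp at ha; exact ha' ha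
  set i := m - 1 with hidef
  have hieq : m = i + 1 := by omega
  rw [hieq] at ha
  have hi : i < u.1.length := by omega
  have hiD : i < D n := by omega
  have hn2 : 1 < n := by
    rcases Nat.lt_or_ge 1 n with h | h
    · exact h
    · exfalso; interval_cases n <;> simp [D] at hiD
  have hylab := ylab_take u a i hi ha
  have hxv := xlab_parent_take hn hi ha
  unfold hfun
  split
  · rename_i hxk
    -- xlab (parent a) = k; show label is true
    have hxkv : min (i / (n - 1)) (n - 1) = kNat n u.1 := by
      rw [← hxv, hxk]
    have hdivlt : i / (n - 1) < n - 1 := by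
      rw [Nat.div_lt_iff_lt_mul (by omega : 0 < n - 1)]
      exact lt_of_lt_of_le hiD (by apply le_of_eq; rfl)
    have hmin : min (i / (n - 1)) (n - 1) = i / (n - 1) := by omega
    by_cases hex : ∃ m', m' < n - 1 ∧
        ∀ j ∈ Finset.Ico (m' * (n - 1)) ((m' + 1) * (n - 1)), u.1.getD j false = true
    · obtain ⟨_, hblock⟩ := kNat_pos_spec hex
      have hdiv : i / (n - 1) = kNat n u.1 := by omega
      have := hblock i (block_mem_of_div hn2 hdiv)
      rw [hylab, this]
      rfl
    · exfalso
      have := kNat_neg hex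
      omega
  · trivial

noncomputable def Tn (n : ℕ) (hn : 0 < n) : AmbTree (Fin n) Bool (Hdeltas n) where
  t := tr n
  xlab := xlabV n hn
  ylab := ylabV n
  hlab v := hfun ⟨kNat n v.1, kNat_lt n hn v.1⟩
  E0 := {v : Vt n | ∃ q, v.1 = q ++ [true]}
  e0_ne_root := by
    rintro a ⟨q, hq⟩ h
    rw [eq_root_iff] at h
    rw [h] at hq
    simp at hq
  e0_unique := by
    intro v hne
    obtain ⟨w, hw⟩ := hne
    obtain ⟨b, hb⟩ := children_concat hw
    have hlen : v.1.length < D n := by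
      have := w.2; rw [hb, length_append] at this; simp at this; omega
    refine ⟨⟨v.1 ++ [true], by rw [length_append]; simpa using hlen⟩,
      Set.mem_inter ?_ ⟨v.1, rfl⟩, ?_⟩
    · rw [mem_children_iff]
      exact ⟨dropLast_concat, by simp⟩
    · rintro y hy
      obtain ⟨q, hq⟩ := hy.2
      have hd := (mem_children_iff.1 hy.1).1
      rw [hq, dropLast_concat] at hd
      exact Subtype.ext (by rw [hq, hd])
  sib_distinct := by
    intro a b ha hb hpar hne hyl
    have ha' : a.1 ≠ [] := fun h => ha ((eq_root_iff a).2 h)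
    have hb' : b.1 ≠ [] := fun h => hb ((eq_root_iff b).2 h)
    have hya : ylabV n a = a.1.getLast ha' := by
      unfold ylabV; rw [getLast?_eq_getLast ha']; rfl
    have hyb : ylabV n b = b.1.getLast hb' := by
      unfold ylabV; rw [getLast?_eq_getLast hb']; rfl
    apply hne
    apply Subtype.ext
    rw [← dropLast_append_getLast ha', ← dropLast_append_getLast hb']
    have hdp : a.1.dropLast = b.1.dropLast := by
      have := congrArg Subtype.val hpar
      rw [parent_eq, parent_eq] at this
      exact this
    rw [hdp, ← hya, ← hyb, hyl]
  hlab_mem := fun u _ => ⟨_, rfl⟩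
  path_mem := path_mem_aux n hn

lemma Tn_relCount_ge (n : ℕ) (hn : 0 < n) (u : Vt n) (hu : (tr n).IsLeaf u) :
    n - 1 ≤ (Tn n hn).relCount u := by
  rcases Nat.lt_or_ge n 2 with h1 | hn2
  · omega
  have hlen := (isLeaf_iff u).1 hu
  -- the prefix vertices
  have hDpos : 0 < n - 1 := by omega
  set S := {a : Vt n | (Tn n hn).Relevant a u} with hS
  -- generic facts about prefix vertices
  have hmk : ∀ i : ℕ, i < D n → ∃ a : Vt n, a.1 = u.1.take (i + 1) := by
    intro i hi
    exact ⟨⟨u.1.take (i + 1), le_trans (by rw [length_take]; omega) u.2⟩, rfl⟩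
  have hanc : ∀ (a : Vt n) (i : ℕ), i < D n → a.1 = u.1.take (i + 1) →
      (tr n).Anc a u ∧ a ≠ (tr n).root := by
    intro a i hi ha
    constructor
    · exact anc_iff_prefix.2 ⟨i + 1, by omega, ha⟩
    · intro h
      rw [eq_root_iff] at h
      rw [h] at ha
      have := congrArg List.length ha
      rw [length_take] at this
      simp at this
      omega
  -- main counting
  set f : ℕ → Vt n := fun i => ⟨u.1.take (i + 1), by rw [length_take]; omega⟩ with hf
  have hfval : ∀ i, (f i).1 = u.1.take (i + 1) := fun i => rfl
  have hflen : ∀ i, i < D n → (f i).1.length = i + 1 := by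
    intro i hi
    rw [hfval, length_take]
    omega
  have hfinj : ∀ i ∈ Set.Iio (D n), ∀ j ∈ Set.Iio (D n), f i = f j → i = j := by
    intro i hi j hj hij
    have := congrArg (fun a : Vt n => a.1.length) hij
    simp only [hflen i hi, hflen j hj] at this
    omega
  have hxf : ∀ i, i < D n → (xlabV n hn ((tr n).parent (f i))).1 = i / (n - 1) := by
    intro i hi
    rw [xlab_parent_take hn (by omega) (hfval i)]
    have : i / (n - 1) < n - 1 := by
      rw [Nat.div_lt_iff_lt_mul (by omega : 0 < n - 1)]
      exact hi
    omega
  have key : ∃ I : Finset ℕ, I.card = n - 1 ∧ (↑I : Set ℕ) ⊆ Set.Iio (D n) ∧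
      ∀ i ∈ I, (Tn n hn).Relevant (f i) u := by
    by_cases hex : ∃ m', m' < n - 1 ∧
        ∀ j ∈ Finset.Ico (m' * (n - 1)) ((m' + 1) * (n - 1)), u.1.getD j false = true
    · -- some block is all true: its E0 edges are relevant
      obtain ⟨hk0, hblock⟩ := kNat_pos_spec hex
      set k0 := kNat n u.1 with hk0def
      refine ⟨Finset.Ico (k0 * (n - 1)) ((k0 + 1) * (n - 1)), ?_, ?_, ?_⟩
      · rw [Nat.card_Ico]
        have : (k0 + 1) * (n - 1) = k0 * (n - 1) + (n - 1) := by ring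
        omega
      · intro i hi
        simp only [Finset.coe_Ico, Set.mem_Ico] at hi
        simp only [Set.mem_Iio]
        have h1 : (k0 + 1) * (n - 1) ≤ (n - 1) * (n - 1) :=
          Nat.mul_le_mul_right _ (by omega)
        have : D n = (n - 1) * (n - 1) := rfl
        omega
      · intro i hi
        have hiD : i < D n := by
          rw [Finset.mem_Ico] at hi
          have h1 : (k0 + 1) * (n - 1) ≤ (n - 1) * (n - 1) :=
            Nat.mul_le_mul_right _ (by omega)
          have : D n = (n - 1) * (n - 1) := rfl
          omega
        obtain ⟨hanc1, hanc2⟩ := hanc (f i) i hiD (hfval i)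
        refine ⟨hanc2, hanc1, Or.inr ?_⟩
        refine ⟨⟨u.1.take i ++ [false], ?_⟩, ?_, ?_, ?_⟩
        · rw [length_append, length_take]
          simp only [List.length_singleton]
          omega
        · apply Subtype.ext
          show (u.1.take i ++ [false]).dropLast = ((tr n).parent (f i)).1
          rw [dropLast_concat, parent_eq, hfval, dropLast_eq_take, length_take, take_take]
          congr 1
          omega
        · intro h
          have h2 : (Tn n hn).t.root = (tr n).root := rfl
          rw [h2] at h; replace h := (eq_root_iff _).1 h
          simp at h
        · show ylabV n _ ∉ hfun ⟨kNat n u.1, kNat_lt n hn u.1⟩ (xlabV n hn ((tr n).parent (f i)))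
          rw [ylabV_concat rfl]
          have hxeq : xlabV n hn ((tr n).parent (f i)) = ⟨kNat n u.1, kNat_lt n hn u.1⟩ := by
            apply Fin.ext
            rw [hxf i hiD]
            exact div_of_block_mem (by omega) hi
          rw [hxeq]
          unfold hfun
          rw [if_pos rfl]
          simp
    · -- no block is all true: each block contributes a non-E0 edge
      push_neg at hex
      have hgex : ∀ m', m' < n - 1 → ∃ j, j ∈ Finset.Ico (m' * (n - 1)) ((m' + 1) * (n - 1)) ∧
          u.1.getD j false = false := by
        intro m' hm'
        obtain ⟨j, hj1, hj2⟩ := hex m' hm'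
        exact ⟨j, hj1, by cases h : u.1.getD j false with
          | true => exact absurd h hj2
          | false => rfl⟩
      choose g hg1 hg2 using hgex
      refine ⟨Finset.image (fun m : Fin (n-1) => g m.1 m.2) Finset.univ, ?_, ?_, ?_⟩
      · rw [Finset.card_image_of_injective, Finset.card_univ, Fintype.card_fin]
        · intro m1 m2 h12
          have h12' : g m1.1 m1.2 = g m2.1 m2.2 := h12
          have e1 := div_of_block_mem (by omega : 1 < n) (hg1 m1.1 m1.2)
          have e2 := div_of_block_mem (by omega : 1 < n) (hg1 m2.1 m2.2)
          apply Fin.ext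
          rw [← e1, ← e2, h12']
      · intro i hi
        simp only [Finset.coe_image, Set.mem_image] at hi
        obtain ⟨m, _, rfl⟩ := hi
        have := Finset.mem_Ico.1 (hg1 m.1 m.2)
        simp only [Set.mem_Iio]
        have h1 : (m.1 + 1) * (n - 1) ≤ (n - 1) * (n - 1) :=
          Nat.mul_le_mul_right _ (by omega)
        have : D n = (n - 1) * (n - 1) := rfl
        omega
      · intro i hi
        simp only [Finset.mem_image] at hi
        obtain ⟨m, _, rfl⟩ := hi
        set i := g m.1 m.2 with hidef
        have hiIco := Finset.mem_Ico.1 (hg1 m.1 m.2)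
        have hiD : i < D n := by
          have h1 : (m.1 + 1) * (n - 1) ≤ (n - 1) * (n - 1) :=
            Nat.mul_le_mul_right _ (by omega)
          have : D n = (n - 1) * (n - 1) := rfl
          omega
        obtain ⟨hanc1, hanc2⟩ := hanc (f i) i hiD (hfval i)
        refine ⟨hanc2, hanc1, Or.inl ?_⟩
        rintro ⟨q, hq⟩
        have := ylabV_concat (v := f i) hq
        rw [ylab_take u (f i) i (by omega) (hfval i)] at this
        rw [hg2 m.1 m.2] at this
        exact Bool.false_ne_true this
  obtain ⟨I, hIcard, hIsub, hIrel⟩ := key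
  have hinj : Set.InjOn f ↑I := fun i hi j hj hij =>
    hfinj i (hIsub hi) j (hIsub hj) hij
  have hsub : f '' ↑I ⊆ S := by
    rintro a ⟨i, hi, rfl⟩
    exact hIrel i hi
  have hcount : (n - 1 : ℕ) = (f '' ↑I).ncard := by
    rw [Set.ncard_image_of_injOn hinj, Set.ncard_coe_finset, hIcard]
  show n - 1 ≤ ((Tn n hn).relCount u)
  unfold AmbTree.relCount
  rw [hcount]
  exact Set.ncard_le_ncard hsub (Set.toFinite _)

lemma Tn_depth (n : ℕ) (hn : 0 < n) : (Tn n hn).depth ≤ n ^ 2 := by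
  show (tr n).depth ≤ n ^ 2
  rw [depth_eq]
  calc D n ≤ n * n := Nat.mul_le_mul (Nat.sub_le n 1) (Nat.sub_le n 1)
  _ = n ^ 2 := (sq n).symm

lemma Tn_rank (n : ℕ) (hn : 0 < n) : (Tn n hn).rank = n - 1 := by
  apply le_antisymm (AmbTree.rank_le _)
  have hu0 : (tr n).IsLeaf ⟨List.replicate (D n) true, by simp⟩ :=
    (isLeaf_iff _).2 (by simp)
  have hne : {m : ℕ | ∃ u : (Tn n hn).t.V, (Tn n hn).t.IsLeaf u ∧
      m = (Tn n hn).relCount u}.Nonempty :=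
    ⟨(Tn n hn).relCount ⟨List.replicate (D n) true, by simp⟩, _, hu0, rfl⟩
  obtain ⟨u, hu, heq⟩ := Nat.sInf_mem hne
  show n - 1 ≤ AmbTree.rank _
  unfold AmbTree.rank
  rw [heq]
  exact Tn_relCount_ge n hn u hu

end Construction

theorem al_Hdeltas' (n : ℕ) (hn : 1 ≤ n) :
    (∃ T : AmbTree (Fin n) Bool (Hdeltas n), T.depth ≤ n ^ 2 ∧ T.rank = n - 1) ∧
      ALn (Fin n) Bool (Hdeltas n) (n ^ 2) = n - 1 := by
  have hn' : 0 < n := hn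
  have hmem : (n - 1) ∈ {r : ℕ | ∃ T : AmbTree (Fin n) Bool (Hdeltas n),
      T.depth ≤ n ^ 2 ∧ r = T.rank} :=
    ⟨Construction.Tn n hn', Construction.Tn_depth n hn', (Construction.Tn_rank n hn').symm⟩
  have hub : ∀ r ∈ {r : ℕ | ∃ T : AmbTree (Fin n) Bool (Hdeltas n),
      T.depth ≤ n ^ 2 ∧ r = T.rank}, r ≤ n - 1 := by
    rintro r ⟨T, _, rfl⟩
    exact AmbTree.rank_le T
  refine ⟨⟨Construction.Tn n hn', Construction.Tn_depth n hn', Construction.Tn_rank n hn'⟩, ?_⟩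
  exact le_antisymm (csSup_le ⟨n - 1, hmem⟩ hub) (le_csSup ⟨n - 1, hub⟩ hmem)

/-- there is an ambiguous shattered `H_n`-tree of depth at most `n²`
and rank `n - 1`; consequently `AL(H_n, n²) = n - 1`. -/
theorem al_Hdeltas (n : ℕ) (hn : 1 ≤ n) :
    (∃ T : AmbTree (Fin n) Bool (Hdeltas n), T.depth ≤ n ^ 2 ∧ T.rank = n - 1) ∧
      ALn (Fin n) Bool (Hdeltas n) (n ^ 2) = n - 1 := al_Hdeltas' n hn
end
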